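/- Let p, q, r, ω : ℝ → ℝ be differentiable functions such that for all t: p(t)² + q(t)² + r(t)² = 1, p′(t)² + q′(t)² + r′(t)² = ω′(t)², and ω′(t) ≠ 0. Define λ = p·cos ω − (p′/ω′)·sin ω, μ = q·cos ω − (q′/ω′)·sin ω, ν = r·cos ω − (r′/ω′)·sin ω. Then for all t: λ(t)² + μ(t)² + ν(t)² = 1. -/

import Mathlib

open Real

theorem euler_lambda_mu_nu_unit
    (p q r ω : ℝ → ℝ)
    (hp : Differentiable ℝ p) (hq : Differentiable ℝ q) (hr : Differentiable ℝ r)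
    (hω : Differentiable ℝ ω)
    (hunit : ∀ t, (p t) ^ 2 + (q t) ^ 2 + (r t) ^ 2 = 1)
    (hspeed : ∀ t, (deriv p t) ^ 2 + (deriv q t) ^ 2 + (deriv r t) ^ 2 = (deriv ω t) ^ 2)
    (hω' : ∀ t, deriv ω t ≠ 0)
    (lam mu nu : ℝ → ℝ)
    (hlam : ∀ t, lam t = p t * cos (ω t) - (deriv p t / deriv ω t) * sin (ω t))
    (hmu : ∀ t, mu t = q t * cos (ω t) - (deriv q t / deriv ω t) * sin (ω t))
    (hnu : ∀ t, nu t = r t * cos (ω t) - (deriv r t / deriv ω t) * sin (ω t)) :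
    ∀ t : ℝ, (lam t) ^ 2 + (mu t) ^ 2 + (nu t) ^ 2 = 1 := by
  intro t
  have horth : p t * deriv p t + q t * deriv q t + r t * deriv r t = 0 := by
    have h1 : (fun s => (p s) ^ 2 + (q s) ^ 2 + (r s) ^ 2) = fun _ => (1 : ℝ) := by
      funext s; exact hunit s
    have h2 : deriv (fun s => (p s) ^ 2 + (q s) ^ 2 + (r s) ^ 2) t = 0 := by
      rw [h1]; simp
    have h3 : deriv (fun s => (p s) ^ 2 + (q s) ^ 2 + (r s) ^ 2) t
        = 2 * p t * deriv p t + 2 * q t * deriv q t + 2 * r t * deriv r t := by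
      have := (((hp t).pow 2).add ((hq t).pow 2)).add ((hr t).pow 2)
      rw [deriv_fun_add (((hp t).fun_pow 2).fun_add ((hq t).fun_pow 2)) ((hr t).fun_pow 2),
        deriv_fun_add ((hp t).fun_pow 2) ((hq t).fun_pow 2), deriv_fun_pow (hp t) 2,
        deriv_fun_pow (hq t) 2, deriv_fun_pow (hr t) 2]
      ring
    nlinarith [h2, h3]
  have hs := hspeed t
  have hu := hunit t
  have hw := hω' t
  have hpyth : sin (ω t) ^ 2 + cos (ω t) ^ 2 = 1 := sin_sq_add_cos_sq (ω t)
  rw [hlam, hmu, hnu]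
  field_simp
  linear_combination (cos (ω t))^2 * (deriv ω t)^2 * hu + (sin (ω t))^2 * hs -
    2 * cos (ω t) * sin (ω t) * deriv ω t * horth + (deriv ω t)^2 * hpyth
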